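/- Let Δ be a finite set of rational strongly convex polyhedral cones in ℝⁿ forming a complete simplicial fan with the property: for every cone σ ∈ Δ with primitive ray generators forming part of a ℤ-basis, and for every maximal cone μ = ⟨ρ₁,…,ρ_n⟩ ∈ Δ, every ray generator ρ of Δ written as ρ = b₁ρ₁+⋯+b_nρ_n satisfies −1 ≤ b_j ≤ 1 with b_j = 1 for at most one j. Then for every maximal cone μ, the functional φ_μ with φ_μ(ρ_i)=1 on the generators of μ satisfies φ_μ(ρ) ≤ 1 for every ray generator ρ of Δ, with equality exactly when ρ is a generator of μ. -/

import Mathlib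

/-- A complete nonsingular (simplicial) fan in ℤⁿ, described combinatorially:
cones are recorded by their (finite) sets of primitive ray generators. -/
structure CompleteNonsingFan (n : ℕ) where
  rays : Finset (Fin n → ℤ)
  cones : Finset (Finset (Fin n → ℤ))
  empty_mem : ∅ ∈ cones
  singleton_mem : ∀ ρ ∈ rays, {ρ} ∈ cones
  cone_rays : ∀ σ ∈ cones, σ ⊆ rays
  face_mem : ∀ σ ∈ cones, ∀ τ ⊆ σ, τ ∈ cones
  /-- nonsingularity: the generators of every cone form part of a ℤ-basis of ℤⁿ -/
  nonsingular : ∀ σ ∈ cones, ∃ b : Module.Basis (Fin n) ℤ (Fin n → ℤ),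
      (σ : Set (Fin n → ℤ)) ⊆ Set.range ⇑b
  /-- completeness: every point of ℝⁿ lies in some cone -/
  complete : ∀ x : Fin n → ℝ, ∃ σ ∈ cones, ∃ c : (Fin n → ℤ) → ℝ,
      (∀ v, 0 ≤ c v) ∧ x = ∑ v ∈ σ, c v • (fun i => (v i : ℝ))

/-- A primitive set: a set of rays not spanning a cone, every proper subset of
which spans a cone. -/
def IsPrimitiveSet {n : ℕ} (F : CompleteNonsingFan n) (P : Finset (Fin n → ℤ)) : Prop :=
  P ⊆ F.rays ∧ P ∉ F.cones ∧ ∀ ρ ∈ P, P.erase ρ ∈ F.cones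

/-- if for every maximal cone μ every ray generator has coordinates
in {−1,0,1} with at most one coordinate +1 (condition (iii)), then for every
maximal cone μ the functional φ_μ with φ_μ = 1 on the generators of μ satisfies
φ_μ(ρ) ≤ 1 on all ray generators, with equality exactly for the generators of μ. -/
theorem stmt_4 (n : ℕ) (F : CompleteNonsingFan n)
    (hiii : ∀ μ ∈ F.cones, μ.card = n → ∀ ρ ∈ F.rays, ∀ b : (Fin n → ℤ) → ℤ,
        ρ = ∑ v ∈ μ, b v • v →
        (∀ v ∈ μ, -1 ≤ b v ∧ b v ≤ 1) ∧
        (∀ v ∈ μ, ∀ w ∈ μ, b v = 1 → b w = 1 → v = w)) :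
    ∀ μ ∈ F.cones, μ.card = n → ∀ φ : (Fin n → ℤ) →ₗ[ℤ] ℤ, (∀ v ∈ μ, φ v = 1) →
      ∀ ρ ∈ F.rays, φ ρ ≤ 1 ∧ (φ ρ = 1 ↔ ρ ∈ μ) := by
  classical
  intro μ hμ hcard φ hφ ρ hρ
  obtain ⟨e, he⟩ := F.nonsingular μ hμ
  have einj : Function.Injective e := e.injective
  have hμeq : μ = Finset.univ.image e := by
    apply Finset.eq_of_subset_of_card_le ?_ ?_
    · intro v hv
      obtain ⟨i, hi⟩ := he hv
      exact Finset.mem_image.mpr ⟨i, Finset.mem_univ i, hi⟩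
    · rw [Finset.card_image_of_injective _ einj, Finset.card_univ, Fintype.card_fin, hcard]
  set c : (Fin n → ℤ) → ℤ :=
    fun v => if h : ∃ i, e i = v then e.repr ρ h.choose else 0 with hc
  have hce : ∀ i, c (e i) = e.repr ρ i := by
    intro i
    have h : ∃ j, e j = e i := ⟨i, rfl⟩
    have hji : h.choose = i := einj h.choose_spec
    simp only [hc, dif_pos h, hji]
  have hrep : ρ = ∑ v ∈ μ, c v • v := by
    rw [hμeq, Finset.sum_image (fun i _ j _ h => einj h)]
    simp only [hce]
    exact (e.sum_repr ρ).symm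
  obtain ⟨hbound, hone⟩ := hiii μ hμ hcard ρ hρ c hrep
  have hφρ : φ ρ = ∑ v ∈ μ, c v := by
    rw [hrep, map_sum]
    refine Finset.sum_congr rfl fun v hv => ?_
    rw [map_smul, hφ v hv, smul_eq_mul, mul_one]
  by_cases hex : ∃ v₀ ∈ μ, c v₀ = 1
  · obtain ⟨v₀, hv₀, hcv₀⟩ := hex
    have hneg : ∀ v ∈ μ.erase v₀, c v ≤ 0 := by
      intro v hv
      have hvμ := Finset.mem_of_mem_erase hv
      rcases lt_or_eq_of_le (hbound v hvμ).2 with h | h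
      · omega
      · exact absurd (hone v hvμ v₀ hv₀ h hcv₀) (Finset.ne_of_mem_erase hv)
    have hsum : φ ρ = 1 + ∑ v ∈ μ.erase v₀, c v := by
      rw [hφρ, ← Finset.add_sum_erase μ c hv₀, hcv₀]
    have hE : ∑ v ∈ μ.erase v₀, c v ≤ 0 := Finset.sum_nonpos hneg
    constructor
    · omega
    · constructor
      · intro h1
        have hE0 : ∑ v ∈ μ.erase v₀, c v = 0 := by omega
        have hall : ∀ v ∈ μ.erase v₀, c v = 0 := by
          intro v hv
          exact le_antisymm (hneg v hv)
            ((Finset.sum_eq_zero_iff_of_nonpos hneg).mp hE0 v hv ▸ le_refl _)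
        have : ρ = v₀ := by
          rw [hrep, ← Finset.add_sum_erase μ _ hv₀, hcv₀, one_smul,
            Finset.sum_eq_zero (fun v hv => by rw [hall v hv, zero_smul]), add_zero]
        exact this ▸ hv₀
      · intro h; exact hφ ρ h
  · push_neg at hex
    have hneg : ∀ v ∈ μ, c v ≤ 0 := by
      intro v hv
      have := (hbound v hv).2
      have := hex v hv
      omega
    have hE : φ ρ ≤ 0 := hφρ ▸ Finset.sum_nonpos hneg
    exact ⟨by omega, by omega, fun h => hφ ρ h⟩
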